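/- arXiv:0805.2479 — 3 statements merged into one kernel-verified Lean document; each statement's English description precedes it below -/
import Mathlib

section
/- Let Φ_0 be the cdf of N(0,σ²) and F(x) = (1-p)Φ_0(x) + pΦ_1(x) where Φ_1 is the cdf of N(0,σ²+τ²), with p ∈ (0,1), σ, τ > 0, α ∈ (0,1). Then the function g(x) = (1-p)(1-Φ_0(x))/(1-F(x)) satisfies g(x) → 0 as x → ∞; consequently the set {x > 0 : g(x) < α} is nonempty and c_fdr = inf{x > 0 : g(x) < α} is finite. -/
open Real Set Filter MeasureTheory

noncomputable def gd (s : ℝ) (t : ℝ) : ℝ :=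
  (1 / (s * Real.sqrt (2 * π))) * Real.exp (-(t ^ 2) / (2 * s ^ 2))

lemma gd_eq (s : ℝ) : gd s = fun t =>
    (1 / (s * Real.sqrt (2 * π))) * Real.exp (-(1 / (2 * s ^ 2)) * t ^ 2) := by
  funext t
  unfold gd
  congr 1
  congr 1
  ring

lemma gd_integrable {s : ℝ} (hs : 0 < s) : Integrable (gd s) := by
  rw [gd_eq]
  exact (integrable_exp_neg_mul_sq (by positivity)).const_mul _

lemma gd_total {s : ℝ} (hs : 0 < s) : ∫ t : ℝ, gd s t = 1 := by
  have h2π : (0:ℝ) < 2 * π := by positivity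
  rw [gd_eq]
  rw [MeasureTheory.integral_const_mul, integral_gaussian]
  have : π / (1 / (2 * s ^ 2)) = (2 * π) * s ^ 2 := by field_simp
  rw [this, Real.sqrt_mul h2π.le, Real.sqrt_sq hs.le]
  field_simp

lemma gd_pos {s : ℝ} (hs : 0 < s) (t : ℝ) : 0 < gd s t := by
  unfold gd; positivity

lemma gd_tail_pos {s : ℝ} (hs : 0 < s) (x : ℝ) : 0 < ∫ t in Ioi x, gd s t := by
  set c : ℝ := (1 / (s * Real.sqrt (2 * π))) * Real.exp (-((|x| + 1) ^ 2) / (2 * s ^ 2)) with hc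
  have hcpos : 0 < c := by positivity
  have h1 : c * (volume (Ioc x (x + 1))).toReal ≤ ∫ t in Ioc x (x + 1), gd s t := by
    apply setIntegral_ge_of_const_le_real measurableSet_Ioc
    · simp [Real.volume_Ioc]
    · intro t ht
      have habs : t ^ 2 ≤ (|x| + 1) ^ 2 := by
        have h1 : t ≤ |x| + 1 := le_trans ht.2 (by linarith [le_abs_self x])
        have h2 : -(|x| + 1) ≤ t := by
          have := neg_abs_le x
          linarith [ht.1.le]
        nlinarith
      unfold gd
      rw [hc]
      gcongr
    · exact (gd_integrable hs).integrableOn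
  have h2 : ∫ t in Ioc x (x + 1), gd s t ≤ ∫ t in Ioi x, gd s t := by
    apply setIntegral_mono_set (gd_integrable hs).integrableOn
    · exact Eventually.of_forall fun t => (gd_pos hs t).le
    · exact Eventually.of_forall fun t ht => ht.1
  have h3 : (volume (Ioc x (x + 1))).toReal = 1 := by
    simp [Real.volume_Ioc]
  rw [h3, mul_one] at h1
  linarith

lemma integral_exp_neg_mul_Ioi {a : ℝ} (ha : 0 < a) (x : ℝ) :
    ∫ t in Ioi x, Real.exp (-(a * t)) = Real.exp (-(a * x)) / a := by
  have key : ∫ t in Ioi x, Real.exp (-(a * t)) = 0 - (-(Real.exp (-(a * x)) / a)) := by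
    apply integral_Ioi_of_hasDerivAt_of_tendsto' (f := fun t => -(Real.exp (-(a * t)) / a))
    · intro t _
      have h1 : HasDerivAt (fun t : ℝ => -(a * t)) (-a) t := by
        have h := ((hasDerivAt_id t).const_mul a).neg; simp only [id, mul_one] at h; exact h
      have h2 := (h1.exp.div_const a).neg
      convert h2 using 1
      · rfl
      · field_simp [ha.ne']
    · have : ∀ t : ℝ, Real.exp (-(a * t)) = Real.exp (-a * t) := by intro t; ring_nf
      simp only [this]
      exact exp_neg_integrableOn_Ioi x ha
    · have h1 : Tendsto (fun t : ℝ => -(a * t)) atTop atBot :=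
        tendsto_neg_atTop_atBot.comp (Tendsto.const_mul_atTop ha tendsto_id)
      have h2 : Tendsto (fun t : ℝ => -(Real.exp (-(a * t)) / a)) atTop (nhds (-(0 / a))) :=
        ((Real.tendsto_exp_atBot.comp h1).div_const a).neg
      rw [zero_div, neg_zero] at h2
      exact h2
  linarith [key]

lemma gd_tail_le {s : ℝ} (hs : 0 < s) {x : ℝ} (hx : 0 < x) :
    ∫ t in Ioi x, gd s t ≤
      (1 / (s * Real.sqrt (2 * π))) * (Real.exp (-(x ^ 2) / (2 * s ^ 2)) * (2 * s ^ 2 / x)) := by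
  set a : ℝ := x / (2 * s ^ 2) with ha
  have hapos : 0 < a := by positivity
  have step1 : ∫ t in Ioi x, gd s t ≤
      ∫ t in Ioi x, (1 / (s * Real.sqrt (2 * π))) * Real.exp (-(a * t)) := by
    apply setIntegral_mono_on (gd_integrable hs).integrableOn
    · apply Integrable.const_mul
      have : ∀ t : ℝ, Real.exp (-(a * t)) = Real.exp (-a * t) := fun t => by ring_nf
      simp only [this]
      exact exp_neg_integrableOn_Ioi x hapos
    · exact measurableSet_Ioi
    · intro t ht
      unfold gd
      gcongr
      have hxt : x ≤ t := ht.out.le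
      have : x * t ≤ t ^ 2 := by nlinarith
      rw [ha, show -(x / (2 * s ^ 2) * t) = -(x * t) / (2 * s ^ 2) by ring,
        div_le_div_iff_of_pos_right (by positivity : (0:ℝ) < 2 * s ^ 2)]
      nlinarith
  have step2 : ∫ t in Ioi x, (1 / (s * Real.sqrt (2 * π))) * Real.exp (-(a * t)) =
      (1 / (s * Real.sqrt (2 * π))) * (Real.exp (-(a * x)) / a) := by
    rw [MeasureTheory.integral_const_mul, integral_exp_neg_mul_Ioi hapos]
  have e1 : -(a * x) = -(x ^ 2) / (2 * s ^ 2) := by rw [ha]; field_simp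
  have e2 : Real.exp (-(a * x)) / a = Real.exp (-(x ^ 2) / (2 * s ^ 2)) * (2 * s ^ 2 / x) := by
    rw [e1, ha]
    field_simp
  rw [step2, e2] at step1
  exact step1

lemma gd_tail_ge {s : ℝ} (hs : 0 < s) {x : ℝ} (hx : 0 ≤ x) :
    (1 / (s * Real.sqrt (2 * π))) * Real.exp (-((x + 1) ^ 2) / (2 * s ^ 2)) ≤
      ∫ t in Ioi x, gd s t := by
  set c : ℝ := (1 / (s * Real.sqrt (2 * π))) * Real.exp (-((x + 1) ^ 2) / (2 * s ^ 2)) with hc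
  have h1 : c * (volume (Ioc x (x + 1))).toReal ≤ ∫ t in Ioc x (x + 1), gd s t := by
    apply setIntegral_ge_of_const_le_real measurableSet_Ioc
    · simp [Real.volume_Ioc]
    · intro t ht
      have habs : t ^ 2 ≤ (x + 1) ^ 2 := by nlinarith [ht.1, ht.2]
      unfold gd; rw [hc]; gcongr
    · exact (gd_integrable hs).integrableOn
  have h2 : ∫ t in Ioc x (x + 1), gd s t ≤ ∫ t in Ioi x, gd s t := by
    apply setIntegral_mono_set (gd_integrable hs).integrableOn
    · exact Eventually.of_forall fun t => (gd_pos hs t).le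
    · exact Eventually.of_forall fun t ht => ht.1
  have h3 : (volume (Ioc x (x + 1))).toReal = 1 := by simp [Real.volume_Ioc]
  rw [h3, mul_one] at h1
  linarith


set_option maxHeartbeats 1000000 in
/-- the BFDR of the one-sided threshold rule,
`g(x) = (1-p)(1-Φ₀(x))/(1-F(x))`, tends to 0 as `x → ∞`; hence the set
`{x > 0 : g(x) < α}` is nonempty (and bounded below), so `c_fdr = inf{x > 0 : g(x) < α}`
is a (finite) real number. -/
theorem bfdr_threshold_exists
    (p σ τ α : ℝ) (hp : p ∈ Ioo (0:ℝ) 1) (hσ : 0 < σ) (hτ : 0 < τ) (hα : α ∈ Ioo (0:ℝ) 1)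
    (Φ0 Φ1 F g : ℝ → ℝ)
    (hΦ0 : Φ0 = fun x => ∫ t in Iic x,
      (1 / (σ * Real.sqrt (2 * π))) * Real.exp (-(t ^ 2) / (2 * σ ^ 2)))
    (hΦ1 : Φ1 = fun x => ∫ t in Iic x,
      (1 / (Real.sqrt (σ ^ 2 + τ ^ 2) * Real.sqrt (2 * π))) *
        Real.exp (-(t ^ 2) / (2 * (σ ^ 2 + τ ^ 2))))
    (hF : F = fun x => (1 - p) * Φ0 x + p * Φ1 x)
    (hg : g = fun x => (1 - p) * (1 - Φ0 x) / (1 - F x)) :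
    Tendsto g atTop (nhds 0) ∧
      {x : ℝ | 0 < x ∧ g x < α}.Nonempty ∧
      BddBelow {x : ℝ | 0 < x ∧ g x < α} := by
  obtain ⟨hp0, hp1⟩ := hp
  obtain ⟨hα0, hα1⟩ := hα
  have h1p : 0 < 1 - p := by linarith
  set s1 : ℝ := Real.sqrt (σ ^ 2 + τ ^ 2) with hs1def
  have hs1 : 0 < s1 := Real.sqrt_pos.mpr (by positivity)
  have hs1sq : s1 ^ 2 = σ ^ 2 + τ ^ 2 := Real.sq_sqrt (by positivity)
  have hΦ0' : Φ0 = fun x => ∫ t in Iic x, gd σ t := by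
    rw [hΦ0]; unfold gd; rfl
  have hΦ1' : Φ1 = fun x => ∫ t in Iic x, gd s1 t := by
    rw [hΦ1]; funext x
    congr 1; funext t; unfold gd; rw [hs1sq]
  -- tails
  set T0 : ℝ → ℝ := fun x => ∫ t in Ioi x, gd σ t with hT0
  set T1 : ℝ → ℝ := fun x => ∫ t in Ioi x, gd s1 t with hT1
  have key0 : ∀ x, 1 - Φ0 x = T0 x := by
    intro x
    have := intervalIntegral.integral_Iic_add_Ioi (μ := volume) (b := x)
      (gd_integrable hσ).integrableOn (gd_integrable hσ).integrableOn
    rw [gd_total hσ] at this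
    rw [hΦ0']; simp only [hT0]; linarith
  have key1 : ∀ x, 1 - Φ1 x = T1 x := by
    intro x
    have := intervalIntegral.integral_Iic_add_Ioi (μ := volume) (b := x)
      (gd_integrable hs1).integrableOn (gd_integrable hs1).integrableOn
    rw [gd_total hs1] at this
    rw [hΦ1']; simp only [hT1]; linarith
  have keyF : ∀ x, 1 - F x = (1 - p) * T0 x + p * T1 x := by
    intro x
    have h0 := key0 x; have h1 := key1 x
    rw [hF]; simp only; nlinarith
  have hT0pos : ∀ x, 0 < T0 x := fun x => gd_tail_pos hσ x
  have hT1pos : ∀ x, 0 < T1 x := fun x => gd_tail_pos hs1 x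
  have hDpos : ∀ x, 0 < 1 - F x := by
    intro x; rw [keyF]; nlinarith [hT0pos x, hT1pos x]
  -- constants
  set c0 : ℝ := 1 / (σ * Real.sqrt (2 * π)) with hc0
  set c1 : ℝ := 1 / (s1 * Real.sqrt (2 * π)) with hc1
  have hc0pos : 0 < c0 := by rw [hc0]; positivity
  have hc1pos : 0 < c1 := by rw [hc1]; positivity
  set K : ℝ := ((1 - p) * (c0 * (2 * σ ^ 2))) / (p * c1) with hK
  set q : ℝ → ℝ := fun x => -(x ^ 2) / (2 * σ ^ 2) + ((x + 1) ^ 2) / (2 * s1 ^ 2) with hq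
  set B : ℝ → ℝ := fun x => K * (x⁻¹ * Real.exp (q x)) with hB
  -- pointwise bound
  have hgB : ∀ x : ℝ, 1 ≤ x → g x ≤ B x := by
    intro x hx1
    have hx : 0 < x := lt_of_lt_of_le one_pos hx1
    have hU : T0 x ≤ c0 * (Real.exp (-(x ^ 2) / (2 * σ ^ 2)) * (2 * σ ^ 2 / x)) :=
      gd_tail_le hσ hx
    have hL : c1 * Real.exp (-((x + 1) ^ 2) / (2 * s1 ^ 2)) ≤ T1 x := gd_tail_ge hs1 hx.le
    have hDa : p * (c1 * Real.exp (-((x + 1) ^ 2) / (2 * s1 ^ 2))) ≤ 1 - F x := by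
      rw [keyF]; nlinarith [hT0pos x]
    have step : g x ≤ ((1 - p) * (c0 * (Real.exp (-(x ^ 2) / (2 * σ ^ 2)) * (2 * σ ^ 2 / x)))) /
        (p * (c1 * Real.exp (-((x + 1) ^ 2) / (2 * s1 ^ 2)))) := by
      rw [hg]
      simp only
      rw [key0 x]
      apply div_le_div₀ (mul_nonneg h1p.le (by positivity))
      · nlinarith [hT0pos x]
      · positivity
      · exact hDa
    refine step.trans (le_of_eq ?_)
    rw [hB]; simp only
    rw [show q x = (-(x ^ 2) / (2 * σ ^ 2)) - (-((x + 1) ^ 2) / (2 * s1 ^ 2)) by rw [hq]; ring,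
      Real.exp_sub, hK]
    have he1 := Real.exp_ne_zero (-((x + 1) ^ 2) / (2 * s1 ^ 2))
    field_simp
  -- limit of B
  set a : ℝ := 1 / (2 * σ ^ 2) - 1 / (2 * s1 ^ 2) with haadef
  have hapos : 0 < a := by
    rw [haadef]
    have h1 : (2 * σ ^ 2) < 2 * s1 ^ 2 := by nlinarith
    have := one_div_lt_one_div_of_lt (by positivity : (0:ℝ) < 2 * σ ^ 2) h1
    linarith
  have hqeq : q = fun x => x * (-(a * x) + 1 / s1 ^ 2) + 1 / (2 * s1 ^ 2) := by
    funext x; rw [hq, haadef]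
    simp only
    field_simp
    ring
  have hqbot : Tendsto q atTop atBot := by
    rw [hqeq]
    apply tendsto_atBot_add_const_right
    apply Tendsto.atTop_mul_atBot₀ tendsto_id
    apply tendsto_atBot_add_const_right
    exact tendsto_neg_atTop_atBot.comp (Tendsto.const_mul_atTop hapos tendsto_id)
  have hBlim : Tendsto B atTop (nhds 0) := by
    rw [hB]
    have h1 : Tendsto (fun x : ℝ => x⁻¹ * Real.exp (q x)) atTop (nhds (0 * 0)) :=
      tendsto_inv_atTop_zero.mul (Real.tendsto_exp_atBot.comp hqbot)
    have := h1.const_mul K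
    simpa using this
  have hg0 : ∀ x : ℝ, 0 ≤ g x := by
    intro x
    rw [hg]; simp only
    rw [key0 x]
    exact div_nonneg (mul_nonneg h1p.le (hT0pos x).le) (hDpos x).le
  have hglim : Tendsto g atTop (nhds 0) := by
    apply tendsto_of_tendsto_of_tendsto_of_le_of_le' tendsto_const_nhds hBlim
    · exact Eventually.of_forall hg0
    · filter_upwards [eventually_ge_atTop (1:ℝ)] with x hx using hgB x hx
  refine ⟨hglim, ?_, ⟨0, fun x hx => hx.1.le⟩⟩
  have hev : ∀ᶠ x in atTop, g x < α := hglim.eventually_lt_const hα0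
  obtain ⟨x, hx1, hx2⟩ := (hev.and (eventually_gt_atTop 0)).exists
  exact ⟨x, hx2, hx1⟩
end

section
/- (Storey's Bayesian interpretation of pFDR for a single threshold rule under the i.i.d. two-component mixture model) If (X_i, γ_i), i = 1,…,m, are i.i.d. with P(γ_i = 1) = p ∈ (0,1), X_i | γ_i = 0 ∼ f_0, X_i | γ_i = 1 ∼ f_A, and a hypothesis is rejected when X_i ∈ Γ for a fixed measurable set Γ with P(X_1 ∈ Γ) > 0, then E[V/R | R > 0] = P(γ_1 = 0 | X_1 ∈ Γ), where R = #{i : X_i ∈ Γ} and V = #{i : X_i ∈ Γ, γ_i = 0}. -/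
open MeasureTheory ProbabilityTheory Set

noncomputable def hfun : ℝ → ℝ := fun x => if x = 0 then 0 else x⁻¹

lemma hfun_measurable : Measurable hfun := by
  unfold hfun
  exact Measurable.ite (measurableSet_eq) measurable_const measurable_inv

lemma hfun_nonneg {x : ℝ} (hx : 0 ≤ x) : 0 ≤ hfun x := by
  unfold hfun; split <;> positivity

lemma hfun_le_one {x : ℝ} (hx : 1 ≤ x) : hfun x ≤ 1 := by
  unfold hfun
  split
  · norm_num
  · exact inv_le_one_of_one_le₀ hx

lemma mul_hfun_self {x : ℝ} : x * hfun x = if x = 0 then 0 else 1 := by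
  unfold hfun
  by_cases h : x = 0 <;> simp [h, mul_inv_cancel₀]

/-- Storey: under the i.i.d. two-component mixture model, the pFDR of the
fixed rejection region `Γ` equals the posterior probability of the null given rejection:
`E[V/R | R > 0] = P(γ₁ = 0 | X₁ ∈ Γ)`. -/
theorem pFDR_eq_posterior_null
    {Ω : Type*} [MeasurableSpace Ω] (μ : Measure Ω) [IsProbabilityMeasure μ]
    (m : ℕ) (hm : 0 < m) (p : ℝ) (hp : p ∈ Ioo (0:ℝ) 1)
    (X : Fin m → Ω → ℝ) (γ : Fin m → Ω → Bool)
    (hX : ∀ i, Measurable (X i)) (hγ : ∀ i, Measurable (γ i))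
    (hiid_indep : iIndepFun (fun i ω => (X i ω, γ i ω)) μ)
    (hiid_ident : ∀ i, IdentDistrib (fun ω => (X i ω, γ i ω)) (fun ω => (X ⟨0, hm⟩ ω, γ ⟨0, hm⟩ ω)) μ μ)
    (hprior : ∀ i, (μ {ω | γ i ω = true}).toReal = p)
    (f0 fA : ℝ → ℝ) (hf0 : Measurable f0) (hfA : Measurable fA)
    (hnull : Measure.map (X ⟨0, hm⟩) (ProbabilityTheory.cond μ {ω | γ ⟨0, hm⟩ ω = false})
      = volume.withDensity (fun x => ENNReal.ofReal (f0 x)))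
    (halt : Measure.map (X ⟨0, hm⟩) (ProbabilityTheory.cond μ {ω | γ ⟨0, hm⟩ ω = true})
      = volume.withDensity (fun x => ENNReal.ofReal (fA x)))
    (Γ : Set ℝ) (hΓ : MeasurableSet Γ) (hΓpos : 0 < μ {ω | X ⟨0, hm⟩ ω ∈ Γ})
    (R V : Ω → ℝ)
    (hRdef : R = fun ω => ∑ i : Fin m, Γ.indicator (fun _ => (1:ℝ)) (X i ω))
    (hVdef : V = fun ω => ∑ i : Fin m,
      Γ.indicator (fun _ => (1:ℝ)) (X i ω) * (if γ i ω = false then 1 else 0))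
    (ratio : Ω → ℝ)
    (hratio : ratio = fun ω => if R ω = 0 then 0 else V ω / R ω) :
    ∫ ω, ratio ω ∂(ProbabilityTheory.cond μ {ω | 0 < R ω})
      = ((ProbabilityTheory.cond μ {ω | X ⟨0, hm⟩ ω ∈ Γ}) {ω | γ ⟨0, hm⟩ ω = false}).toReal := by
  classical
  set i0 : Fin m := ⟨0, hm⟩ with hi0
  set F : Fin m → Ω → ℝ × Bool := fun i ω => (X i ω, γ i ω) with hFdef
  have hFmeas : ∀ i, Measurable (F i) := fun i => (hX i).prodMk (hγ i)
  set ind : ℝ → ℝ := Γ.indicator (fun _ => (1:ℝ)) with hinddef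
  have hindmeas : Measurable ind := measurable_const.indicator hΓ
  have hind0 : ∀ x, 0 ≤ ind x := fun x => indicator_nonneg (fun _ _ => zero_le_one) x
  have hind1 : ∀ x, ind x ≤ 1 := by
    intro x; rw [hinddef]; by_cases h : x ∈ Γ <;> simp [indicator, h]
  -- per-index functions
  set g : Fin m → Ω → ℝ := fun i ω => ind (X i ω) * (if γ i ω = false then 1 else 0) with hgdef
  set u : Fin m → Ω → ℝ := fun i ω => ind (X i ω) with hudef
  set S : Fin m → Ω → ℝ := fun i ω => ∑ j ∈ ({i}ᶜ : Finset (Fin m)), ind (X j ω) with hSdef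
  set G : Fin m → Ω → ℝ := fun i ω => hfun (1 + S i ω) with hGdef
  have hgmeas : ∀ i, Measurable (g i) := by
    intro i
    exact (hindmeas.comp (hX i)).mul
      (Measurable.ite ((hγ i) (measurableSet_singleton false)) measurable_const measurable_const)
  have humeas : ∀ i, Measurable (u i) := fun i => hindmeas.comp (hX i)
  have hSmeas : ∀ i, Measurable (S i) := by
    intro i
    exact Finset.measurable_sum _ (fun j _ => hindmeas.comp (hX j))
  have hGmeas : ∀ i, Measurable (G i) := fun i =>
    hfun_measurable.comp (measurable_const.add (hSmeas i))
  have hSnonneg : ∀ i ω, 0 ≤ S i ω := fun i ω =>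
    Finset.sum_nonneg (fun j _ => hind0 _)
  have hG0 : ∀ i ω, 0 ≤ G i ω := fun i ω => hfun_nonneg (by linarith [hSnonneg i ω])
  have hG1 : ∀ i ω, G i ω ≤ 1 := fun i ω => hfun_le_one (by linarith [hSnonneg i ω])
  have hg0 : ∀ i ω, 0 ≤ g i ω := by
    intro i ω; rw [hgdef]; dsimp only; split <;> simp [hind0]
  have hg1 : ∀ i ω, g i ω ≤ 1 := by
    intro i ω; rw [hgdef]; dsimp only; split <;> simp [hind1, hind0]
  have hRmeas : Measurable R := by
    rw [hRdef]; exact Finset.measurable_sum _ (fun j _ => hindmeas.comp (hX j))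
  -- R splits
  have hRsplit : ∀ i ω, R ω = ind (X i ω) + S i ω := by
    intro i ω
    rw [hRdef, hSdef]
    dsimp only
    rw [← Finset.sum_compl_add_sum ({i} : Finset (Fin m)) (fun j => ind (X j ω)),
      Finset.sum_singleton, add_comm]
  have hRnonneg : ∀ ω, 0 ≤ R ω := by
    intro ω; rw [hRdef]; exact Finset.sum_nonneg (fun j _ => hind0 _)
  -- key pointwise identities
  have hgG : ∀ i ω, g i ω * hfun (R ω) = g i ω * G i ω := by
    intro i ω
    by_cases hx : X i ω ∈ Γ
    · have h1 : ind (X i ω) = 1 := indicator_of_mem hx _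
      rw [hRsplit i ω, h1, hGdef]
    · have h1 : ind (X i ω) = 0 := indicator_of_notMem hx _
      rw [hgdef]; dsimp only; rw [h1, zero_mul, zero_mul, zero_mul]
  have huG : ∀ i ω, u i ω * hfun (R ω) = u i ω * G i ω := by
    intro i ω
    by_cases hx : X i ω ∈ Γ
    · have h1 : ind (X i ω) = 1 := indicator_of_mem hx _
      rw [hRsplit i ω, h1, hGdef]
    · have h1 : ind (X i ω) = 0 := indicator_of_notMem hx _
      rw [hudef]; dsimp only; rw [h1, zero_mul, zero_mul]
  -- independence
  have hbase : ∀ i : Fin m, IndepFun (fun a (j : ({i} : Finset (Fin m))) => F j a)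
      (fun a (j : (({i}ᶜ : Finset (Fin m)) : Finset (Fin m))) => F j a) μ :=
    fun i => hiid_indep.indepFun_finset {i} {i}ᶜ disjoint_compl_right hFmeas
  have hψmeas : ∀ i : Fin m, Measurable (fun v : (({i}ᶜ : Finset (Fin m)) → ℝ × Bool) =>
      hfun (1 + ∑ j : ({i}ᶜ : Finset (Fin m)), ind (v j).1)) := by
    intro i
    exact hfun_measurable.comp (measurable_const.add
      (Finset.measurable_sum _ (fun j _ => hindmeas.comp (measurable_fst.comp (measurable_pi_apply j)))))
  have hψcomp : ∀ (i : Fin m) (ω : Ω),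
      hfun (1 + ∑ j : ({i}ᶜ : Finset (Fin m)), ind ((fun a (j : ({i}ᶜ : Finset (Fin m))) => F j a) ω j).1)
        = G i ω := by
    intro i ω
    rw [hGdef, hSdef]
    dsimp only
    rw [Finset.sum_coe_sort ({i}ᶜ : Finset (Fin m)) (fun j => ind (X j ω))]
  have hIndepg : ∀ i, IndepFun (g i) (G i) μ := by
    intro i
    have himem : i ∈ ({i} : Finset (Fin m)) := Finset.mem_singleton_self i
    have hφ : Measurable (fun v : (({i} : Finset (Fin m)) → ℝ × Bool) =>
        ind (v ⟨i, himem⟩).1 * (if (v ⟨i, himem⟩).2 = false then (1:ℝ) else 0)) := by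
      exact (hindmeas.comp (measurable_fst.comp (measurable_pi_apply _))).mul
        (Measurable.ite ((measurable_snd.comp (measurable_pi_apply _)) (measurableSet_singleton false))
          measurable_const measurable_const)
    have h := (hbase i).comp hφ (hψmeas i)
    convert h using 1
    · rfl
    funext ω; exact (hψcomp i ω).symm
  have hIndepu : ∀ i, IndepFun (u i) (G i) μ := by
    intro i
    have himem : i ∈ ({i} : Finset (Fin m)) := Finset.mem_singleton_self i
    have hφ : Measurable (fun v : (({i} : Finset (Fin m)) → ℝ × Bool) =>
        ind (v ⟨i, himem⟩).1) :=
      hindmeas.comp (measurable_fst.comp (measurable_pi_apply _))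
    have h := (hbase i).comp hφ (hψmeas i)
    convert h using 1
    · rfl
    funext ω; exact (hψcomp i ω).symm
  -- measure identities across indices
  have hpreAB : ∀ i : Fin m, (fun ω => (X i ω, γ i ω)) ⁻¹' (Γ ×ˢ ({false} : Set Bool))
      = {ω | X i ω ∈ Γ ∧ γ i ω = false} := by
    intro i; ext ω; constructor
    · rintro ⟨h1, h2⟩; exact ⟨h1, h2⟩
    · rintro ⟨h1, h2⟩; exact ⟨h1, h2⟩
  have hpreA : ∀ i : Fin m, (fun ω => (X i ω, γ i ω)) ⁻¹' (Γ ×ˢ (univ : Set Bool))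
      = {ω | X i ω ∈ Γ} := by
    intro i; ext ω; simp [Set.mem_prod]
  have hmeasAB : ∀ i, μ {ω | X i ω ∈ Γ ∧ γ i ω = false} = μ {ω | X i0 ω ∈ Γ ∧ γ i0 ω = false} := by
    intro i
    have h := (hiid_ident i).measure_mem_eq (s := Γ ×ˢ ({false} : Set Bool))
      (hΓ.prod (measurableSet_singleton _))
    rwa [hpreAB i, hpreAB i0] at h
  have hmeasA : ∀ i, μ {ω | X i ω ∈ Γ} = μ {ω | X i0 ω ∈ Γ} := by
    intro i
    have h := (hiid_ident i).measure_mem_eq (s := Γ ×ˢ (univ : Set Bool))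
      (hΓ.prod MeasurableSet.univ)
    rwa [hpreA i, hpreA i0] at h
  -- integrals of the indicator pieces
  have hintg : ∀ i, ∫ ω, g i ω ∂μ = (μ {ω | X i0 ω ∈ Γ ∧ γ i0 ω = false}).toReal := by
    intro i
    have hgi : g i = ({ω | X i ω ∈ Γ ∧ γ i ω = false} : Set Ω).indicator (fun _ => (1:ℝ)) := by
      funext ω
      by_cases hx : X i ω ∈ Γ <;> by_cases hb : γ i ω = false <;>
        simp [hgdef, hinddef, Set.indicator, hx, hb]
    rw [hgi, ← hmeasAB i]
    exact integral_indicator_one ((hX i hΓ).inter (hγ i (measurableSet_singleton false)))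
  have hintu : ∀ i, ∫ ω, u i ω ∂μ = (μ {ω | X i0 ω ∈ Γ}).toReal := by
    intro i
    have hui : u i = ({ω | X i ω ∈ Γ} : Set Ω).indicator (fun _ => (1:ℝ)) := by
      funext ω
      by_cases hx : X i ω ∈ Γ <;> simp [hudef, hinddef, Set.indicator, hx]
    rw [hui, ← hmeasA i]
    exact integral_indicator_one (hX i hΓ)
  -- integrability
  have hbdd : ∀ (f : Ω → ℝ), Measurable f → (∀ ω, ‖f ω‖ ≤ 1) → Integrable f μ := fun f hf hb =>
    ⟨hf.aestronglyMeasurable, HasFiniteIntegral.of_bounded (C := 1) (ae_of_all μ hb)⟩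
  have hintgG : ∀ i, Integrable (fun ω => g i ω * G i ω) μ := by
    intro i
    refine hbdd _ ((hgmeas i).mul (hGmeas i)) (fun ω => ?_)
    rw [Real.norm_eq_abs, abs_of_nonneg (mul_nonneg (hg0 i ω) (hG0 i ω))]
    calc g i ω * G i ω ≤ 1 * 1 :=
          mul_le_mul (hg1 i ω) (hG1 i ω) (hG0 i ω) zero_le_one
      _ = 1 := mul_one 1
  have hintuG : ∀ i, Integrable (fun ω => u i ω * G i ω) μ := by
    intro i
    refine hbdd _ ((humeas i).mul (hGmeas i)) (fun ω => ?_)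
    rw [Real.norm_eq_abs, abs_of_nonneg (mul_nonneg (hind0 _) (hG0 i ω))]
    calc u i ω * G i ω ≤ 1 * 1 :=
          mul_le_mul (hind1 _) (hG1 i ω) (hG0 i ω) zero_le_one
      _ = 1 := mul_one 1
  -- factored integrals via independence
  set a := (μ {ω | X i0 ω ∈ Γ ∧ γ i0 ω = false}).toReal with hadef
  set b := (μ {ω | X i0 ω ∈ Γ}).toReal with hbdef
  set c : Fin m → ℝ := fun i => ∫ ω, G i ω ∂μ with hcdef
  have hgGint : ∀ i, ∫ ω, g i ω * G i ω ∂μ = a * c i := by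
    intro i
    have h := (hIndepg i).integral_mul_eq_mul_integral (hgmeas i).aestronglyMeasurable
      (hGmeas i).aestronglyMeasurable
    rw [show (fun ω => g i ω * G i ω) = g i * G i from rfl]
    rw [h, hintg i]
  have huGint : ∀ i, ∫ ω, u i ω * G i ω ∂μ = b * c i := by
    intro i
    have h := (hIndepu i).integral_mul_eq_mul_integral (humeas i).aestronglyMeasurable
      (hGmeas i).aestronglyMeasurable
    rw [show (fun ω => u i ω * G i ω) = u i * G i from rfl]
    rw [h, hintu i]
  -- the event T = {R > 0}
  set T := {ω | 0 < R ω} with hTdef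
  have hTmeas : MeasurableSet T := measurableSet_lt measurable_const hRmeas
  have hsub : {ω | X i0 ω ∈ Γ} ⊆ T := by
    intro ω hω
    have hx : X i0 ω ∈ Γ := hω
    have h1 : ind (X i0 ω) = 1 := indicator_of_mem hx _
    have h2 := hRsplit i0 ω
    show 0 < R ω
    rw [h2, h1]; linarith [hSnonneg i0 ω]
  have hTpos : 0 < μ T := lt_of_lt_of_le hΓpos (measure_mono hsub)
  set t := (μ T).toReal with htdef
  have htpos : 0 < t := ENNReal.toReal_pos (ne_of_gt hTpos) (measure_ne_top μ T)
  have hbpos : 0 < b := ENNReal.toReal_pos (ne_of_gt hΓpos) (measure_ne_top μ _)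
  -- ∑ u * G integrates to t
  have hptu : ∀ ω, ∑ i : Fin m, u i ω * G i ω = T.indicator (fun _ => (1:ℝ)) ω := by
    intro ω
    have h1 : ∑ i : Fin m, u i ω * G i ω = ∑ i : Fin m, u i ω * hfun (R ω) :=
      Finset.sum_congr rfl (fun i _ => (huG i ω).symm)
    have h2 : (∑ i : Fin m, u i ω) = R ω := by simp only [hudef, hRdef]
    rw [h1, ← Finset.sum_mul, h2, mul_hfun_self]
    by_cases hR : R ω = 0
    · have : ω ∉ T := by simp [hTdef, hR]
      simp [hR, Set.indicator_of_notMem this]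
    · have hpos : 0 < R ω := lt_of_le_of_ne (hRnonneg ω) (Ne.symm hR)
      have : ω ∈ T := hpos
      simp [hR, Set.indicator_of_mem this]
  have hbc : b * ∑ i : Fin m, c i = t := by
    rw [Finset.mul_sum]
    have h1 : ∑ i : Fin m, b * c i = ∑ i : Fin m, ∫ ω, u i ω * G i ω ∂μ :=
      Finset.sum_congr rfl (fun i _ => (huGint i).symm)
    rw [h1, ← integral_finset_sum Finset.univ (fun i _ => hintuG i)]
    simp_rw [hptu]
    rw [htdef]
    exact integral_indicator_one hTmeas
  -- ratio decomposes
  have hratio2 : ∀ ω, ratio ω = ∑ i : Fin m, g i ω * G i ω := by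
    intro ω
    have hV : V ω = ∑ i : Fin m, g i ω := by simp only [hVdef, hgdef]
    have h1 : ratio ω = V ω * hfun (R ω) := by
      rw [hratio]
      by_cases hR : R ω = 0
      · simp [hR, hfun]
      · simp only [hR, if_false]
        rw [div_eq_mul_inv]
        unfold hfun
        rw [if_neg hR]
    rw [h1, hV, Finset.sum_mul]
    exact Finset.sum_congr rfl (fun i _ => hgG i ω)
  have hratio_int : ∫ ω, ratio ω ∂μ = a * ∑ i : Fin m, c i := by
    calc ∫ ω, ratio ω ∂μ = ∫ ω, ∑ i : Fin m, g i ω * G i ω ∂μ := by simp_rw [hratio2]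
      _ = ∑ i : Fin m, ∫ ω, g i ω * G i ω ∂μ :=
          integral_finset_sum _ (fun i _ => hintgG i)
      _ = ∑ i : Fin m, a * c i := Finset.sum_congr rfl (fun i _ => hgGint i)
      _ = a * ∑ i : Fin m, c i := (Finset.mul_sum _ _ _).symm
  -- left-hand side
  have hLHS : ∫ ω, ratio ω ∂(ProbabilityTheory.cond μ T) = t⁻¹ * (a * ∑ i : Fin m, c i) := by
    rw [ProbabilityTheory.cond, integral_smul_measure, ENNReal.toReal_inv]
    have hres : ∫ ω, ratio ω ∂(μ.restrict T) = ∫ ω, ratio ω ∂μ := by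
      apply setIntegral_eq_integral_of_forall_compl_eq_zero
      intro ω hω
      have hR0 : R ω = 0 := le_antisymm (not_lt.1 hω) (hRnonneg ω)
      rw [hratio]; simp [hR0]
    rw [hres, hratio_int, smul_eq_mul, htdef]
  -- right-hand side
  have hRHS : ((ProbabilityTheory.cond μ {ω | X i0 ω ∈ Γ}) {ω | γ i0 ω = false}).toReal
      = b⁻¹ * a := by
    rw [ProbabilityTheory.cond_apply (show MeasurableSet {ω | X i0 ω ∈ Γ} from hX i0 hΓ) μ
      {ω | γ i0 ω = false}, ENNReal.toReal_mul, ENNReal.toReal_inv]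
    rw [show ({ω | X i0 ω ∈ Γ} ∩ {ω | γ i0 ω = false} : Set Ω)
      = {ω | X i0 ω ∈ Γ ∧ γ i0 ω = false} from rfl]
  rw [hLHS, hRHS, ← hbc]
  have hcpos : 0 < ∑ i : Fin m, c i := by
    by_contra hc
    push_neg at hc
    nlinarith
  field_simp
end

section
/- (FDR of BH under independence, Benjamini–Yekutieli Theorem 5.1, special case) If all m null hypotheses are true and the p-values P_1,…,P_m are i.i.d. Uniform(0,1), then the FDR of the Benjamini–Hochberg procedure at level α equals α. -/
open MeasureTheory ProbabilityTheory Set Finset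

namespace BHProof


def T (x : ℕ → ℕ) : ℕ → ℤ
  | 0 => 0
  | j+1 => T x j + 1 - x j

lemma T_succ (x : ℕ → ℕ) (j : ℕ) : T x (j+1) = T x j + 1 - x j := rfl

lemma T_eq (x : ℕ → ℕ) (b : ℕ) : T x b = b - ∑ i ∈ range b, (x i : ℤ) := by
  induction b with
  | zero => simp [T]
  | succ b ih => rw [T_succ, ih, Finset.sum_range_succ]; push_cast; ring

lemma T_le_succ (x : ℕ → ℕ) (j : ℕ) : T x (j+1) ≤ T x j + 1 := by
  rw [T_succ]; have : (0:ℤ) ≤ x j := Int.natCast_nonneg _; omega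

lemma T_shift (m : ℕ) (x : ℕ → ℕ) (hper : ∀ j, x (j + m) = x j) (j : ℕ) :
    T x (j + m) = T x j + ((m : ℤ) - ∑ i ∈ range m, (x i : ℤ)) := by
  induction j with
  | zero => rw [T_eq, T_eq]; simp
  | succ j ih =>
      have e : j + 1 + m = (j + m) + 1 := by omega
      rw [e, T_succ, ih, hper, T_succ]; ring

def good (m : ℕ) (x : ℕ → ℕ) (r : ℕ) : Prop :=
  ∀ k ∈ Finset.Icc 1 m, (∑ i ∈ range k, x (r + i)) < k

instance (m : ℕ) (x : ℕ → ℕ) (r : ℕ) : Decidable (good m x r) := by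
  unfold good; infer_instance

lemma sum_range_add' (x : ℕ → ℤ) (a b : ℕ) :
    ∑ i ∈ range (a + b), x i = ∑ i ∈ range a, x i + ∑ i ∈ range b, x (a + i) := by
  induction b with
  | zero => simp
  | succ b ih => rw [← Nat.add_assoc, Finset.sum_range_succ, ih, Finset.sum_range_succ]; ring

lemma T_sub (x : ℕ → ℕ) (r k : ℕ) :
    T x (r + k) = T x r + ((k : ℤ) - ∑ i ∈ range k, (x (r + i) : ℤ)) := by
  rw [T_eq, T_eq, sum_range_add' (fun i => (x i : ℤ))]; push_cast; ring

lemma good_iff_T (m : ℕ) (x : ℕ → ℕ) (r : ℕ) :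
    good m x r ↔ ∀ k ∈ Finset.Icc 1 m, T x r < T x (r + k) := by
  unfold good
  refine forall₂_congr fun k _ => ?_
  rw [T_sub]
  constructor
  · intro h; have : (∑ i ∈ range k, (x (r+i) : ℤ)) < k := by exact_mod_cast h
    omega
  · intro h
    have : (∑ i ∈ range k, (x (r+i) : ℤ)) < (k:ℤ) := by omega
    exact_mod_cast this

section M
variable (m : ℕ) (hm : m ≠ 0) (x : ℕ → ℕ)

noncomputable def M (r : ℕ) : ℤ :=
  (range m).inf' (by simpa using hm) fun i => T x (r + i)

lemma M_le (r i : ℕ) (hi : i < m) : M m hm x r ≤ T x (r + i) :=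
  Finset.inf'_le _ (Finset.mem_range.mpr hi)

lemma le_M (r : ℕ) (c : ℤ) (h : ∀ i < m, c ≤ T x (r + i)) : c ≤ M m hm x r :=
  Finset.le_inf' _ _ fun i hi => h i (Finset.mem_range.mp hi)

lemma key_step (hper : ∀ j, x (j + m) = x j) (hn : ∑ i ∈ range m, x i ≤ m) (r : ℕ) :
    M m hm x (r+1) = M m hm x r + if good m x r then 1 else 0 := by
  have hk' : (0:ℤ) ≤ (m : ℤ) - ∑ i ∈ range m, (x i : ℤ) := by
    have : ((∑ i ∈ range m, x i : ℕ) : ℤ) ≤ (m:ℤ) := by exact_mod_cast hn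
    push_cast at this ⊢; omega
  by_cases h : good m x r
  · rw [if_pos h]
    rw [good_iff_T] at h
    have hMr : M m hm x r = T x r := by
      refine le_antisymm (by simpa using M_le m hm x r 0 (Nat.pos_of_ne_zero hm)) ?_
      refine le_M m hm x r _ fun i hi => ?_
      rcases Nat.eq_zero_or_pos i with h0 | h0
      · simp [h0]
      · exact (h i (Finset.mem_Icc.mpr ⟨h0, hi.le⟩)).le
    rw [hMr]
    refine le_antisymm ?_ ?_
    · calc M m hm x (r+1) ≤ T x (r+1+0) := M_le m hm x (r+1) 0 (Nat.pos_of_ne_zero hm)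
        _ ≤ T x r + 1 := by simpa using T_le_succ x r
    · refine le_M m hm x (r+1) _ fun i hi => ?_
      have ht : T x r < T x (r + (i+1)) :=
        h (i+1) (Finset.mem_Icc.mpr ⟨Nat.le_add_left 1 i, hi⟩)
      rw [show r + 1 + i = r + (i + 1) from by omega]
      omega
  · rw [if_neg h, add_zero]
    rw [good_iff_T] at h
    push_neg at h
    obtain ⟨k₀, hk₀, hTk₀⟩ := h
    rw [Finset.mem_Icc] at hk₀
    refine le_antisymm ?_ ?_
    · -- M (r+1) ≤ M r : lower-bound each element of the window of M r by M (r+1)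
      refine le_M m hm x r _ fun i hi => ?_
      rcases Nat.eq_zero_or_pos i with h0 | h0
      · subst h0
        have h2 := M_le m hm x (r+1) (k₀ - 1) (by omega)
        rw [show r + 1 + (k₀ - 1) = r + k₀ from by omega] at h2
        simpa using le_trans h2 hTk₀
      · have h2 := M_le m hm x (r+1) (i-1) (by omega)
        rw [show r + 1 + (i - 1) = r + i from by omega] at h2
        exact h2
    · -- M r ≤ M (r+1)
      refine le_M m hm x (r+1) _ fun i hi => ?_
      rcases Nat.lt_or_ge (i+1) m with h1 | h1
      · have h2 := M_le m hm x r (i+1) h1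
        rw [show r + (i+1) = r + 1 + i from by omega] at h2
        exact h2
      · have hs : T x (r + 1 + i) = T x r + ((m:ℤ) - ∑ i ∈ range m, (x i : ℤ)) := by
          rw [show r + 1 + i = r + m from by omega]; exact T_shift m x hper r
        have h2 := M_le m hm x r 0 (Nat.pos_of_ne_zero hm)
        simp only [Nat.add_zero] at h2
        omega

lemma M_period (hper : ∀ j, x (j + m) = x j) : M m hm x m = M m hm x 0 + ((m:ℤ) - ∑ i ∈ range m, (x i : ℤ)) := by
  refine le_antisymm ?_ ?_
  · have : M m hm x m - ((m:ℤ) - ∑ i ∈ range m, (x i : ℤ)) ≤ M m hm x 0 := by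
      refine le_M m hm x 0 _ fun i hi => ?_
      have := M_le m hm x m i hi
      rw [show m + i = i + m by omega, T_shift m x hper i, Nat.zero_add] at *
      omega
    omega
  · refine le_M m hm x m _ fun i hi => ?_
    have := M_le m hm x 0 i hi
    rw [show m + i = i + m by omega, T_shift m x hper i]
    simp only [Nat.zero_add] at this
    omega

include hm in
lemma cycle_count (hper : ∀ j, x (j + m) = x j) (hn : ∑ i ∈ range m, x i ≤ m) :
    (((range m).filter (good m x)).card : ℤ) = (m : ℤ) - ∑ i ∈ range m, (x i : ℤ) := by
  have tele : ∑ r ∈ range m, (M m hm x (r+1) - M m hm x r) = M m hm x m - M m hm x 0 :=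
    Finset.sum_range_sub (M m hm x) m
  have : ∑ r ∈ range m, (M m hm x (r+1) - M m hm x r)
      = ∑ r ∈ range m, (if good m x r then (1:ℤ) else 0) := by
    refine Finset.sum_congr rfl fun r _ => ?_
    rw [key_step m hm x hper hn r]; ring
  rw [this, M_period m hm x hper] at tele
  have hc : ((((range m).filter (good m x)).card : ℕ) : ℤ)
      = ∑ r ∈ range m, (if good m x r then (1:ℤ) else 0) := by
    rw [Finset.card_filter]
    push_cast
    rfl
  rw [hc, tele]
  ring

end M
section Comb
variable (m : ℕ)

/-- The "rejection" event on cell-index configurations. -/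
def Bad (y : Fin m → Fin (m+1)) : Prop :=
  ∃ k ∈ Finset.Icc 1 m, k ≤ (univ.filter fun j => ((y j : ℕ)) < k).card

instance (y : Fin m → Fin (m+1)) : Decidable (Bad m y) := by
  unfold Bad; infer_instance

/-- cell counts (made `m`-periodic). -/
def xc (y : Fin m → Fin (m+1)) : ℕ → ℕ :=
  fun i => (univ.filter fun j => ((y j : ℕ)) = i % m).card

lemma xc_per (y : Fin m → Fin (m+1)) (j : ℕ) : xc m y (j + m) = xc m y j := by
  unfold xc; rw [Nat.add_mod_right]

lemma xc_sum (hm : m ≠ 0) (y : Fin m → Fin (m+1)) :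
    ∑ i ∈ range m, xc m y i = (univ.filter fun j => ((y j : ℕ)) < m).card := by
  rw [Finset.card_eq_sum_card_fiberwise (f := fun j => ((y j : ℕ)))
    (t := range m) (fun j hj => Finset.mem_range.mpr (by simpa using (Finset.mem_filter.mp hj).2))]
  refine Finset.sum_congr rfl fun i hi => ?_
  have hi' := Finset.mem_range.mp hi
  unfold xc
  rw [Nat.mod_eq_of_lt hi', Finset.filter_filter]
  congr 1
  ext j
  simp only [Finset.mem_filter, Finset.mem_univ, true_and]
  omega

/-- The cell rotation: rotates the first `m` cells, fixes the last. -/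
def sig (r : ℕ) (v : Fin (m+1)) : Fin (m+1) :=
  if h : (v : ℕ) < m then
    ⟨((v : ℕ) + (m - r)) % m, lt_of_lt_of_le (Nat.mod_lt _ (by omega)) (by omega)⟩
  else v

lemma sig_val_lt (r : ℕ) (v : Fin (m+1)) : ((sig m r v : ℕ)) < m ↔ (v : ℕ) < m := by
  unfold sig
  by_cases h : (v : ℕ) < m
  · simp only [dif_pos h]; exact ⟨fun _ => h, fun _ => Nat.mod_lt _ (by omega)⟩
  · simp [dif_neg h]

lemma sig_val_eq_iff (r : ℕ) (hr : r < m) (v : Fin (m+1)) (i : ℕ) (hi : i < m) :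
    ((sig m r v : ℕ)) = i ↔ (v : ℕ) = (r + i) % m := by
  unfold sig
  by_cases h : (v : ℕ) < m
  · simp only [dif_pos h]
    constructor
    · intro he
      have hv : (r + i) % m = (v : ℕ) := by
        rw [← he, Nat.add_mod_mod, show r + ((v : ℕ) + (m - r)) = (v : ℕ) + m from by omega,
          Nat.add_mod_right, Nat.mod_eq_of_lt h]
      omega
    · intro he
      rw [he, Nat.mod_add_mod, show r + i + (m - r) = i + m from by omega, Nat.add_mod_right,
        Nat.mod_eq_of_lt hi]
  · simp only [dif_neg h]
    constructor
    · intro he; omega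
    · intro he
      exfalso; exact h (he ▸ Nat.mod_lt _ (by omega))

lemma sig_inj (r : ℕ) (hr : r < m) : Function.Injective (sig m r) := by
  intro v v' he
  by_cases h : ((sig m r v : ℕ)) < m
  · have h1 : ((sig m r v : ℕ)) = ((sig m r v : ℕ)) := rfl
    have h2 := (sig_val_eq_iff m r hr v _ h).mp rfl
    have h3 := (sig_val_eq_iff m r hr v' _ h).mp (by rw [he])
    exact Fin.ext (by omega)
  · have h' : ¬ ((sig m r v' : ℕ)) < m := by rw [← he]; exact h
    have hv : ¬ ((v : ℕ) < m) := fun hh => h ((sig_val_lt m r v).mpr hh)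
    have hv' : ¬ ((v' : ℕ) < m) := fun hh => h' ((sig_val_lt m r v').mpr hh)
    have e1 : (v : ℕ) = m := by have := v.isLt; omega
    have e2 : (v' : ℕ) = m := by have := v'.isLt; omega
    exact Fin.ext (by omega)

/-- counting points below `k` after rotation = windowed cell-count sum. -/
lemma count_rot (r : ℕ) (hr : r < m) (y : Fin m → Fin (m+1)) (k : ℕ) (hk1 : 1 ≤ k) (hkm : k ≤ m) :
    (univ.filter fun j => ((sig m r (y j) : ℕ)) < k).card = ∑ i ∈ range k, xc m y (r + i) := by
  rw [Finset.card_eq_sum_card_fiberwise (f := fun j => ((sig m r (y j) : ℕ)))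
    (t := range k) (fun j hj => Finset.mem_range.mpr (by simpa using (Finset.mem_filter.mp hj).2))]
  refine Finset.sum_congr rfl fun i hi => ?_
  have hi' : i < k := Finset.mem_range.mp hi
  have him : i < m := lt_of_lt_of_le hi' hkm
  rw [Finset.filter_filter]
  unfold xc
  congr 1
  ext j
  simp only [Finset.mem_filter, Finset.mem_univ, true_and]
  constructor
  · rintro ⟨_, h2⟩
    exact (sig_val_eq_iff m r hr (y j) i him).mp h2
  · intro h
    have hs := (sig_val_eq_iff m r hr (y j) i him).mpr h
    exact ⟨by omega, hs⟩

lemma bad_rot_iff (r : ℕ) (hr : r < m) (y : Fin m → Fin (m+1)) :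
    Bad m (fun j => sig m r (y j)) ↔ ¬ good m (xc m y) r := by
  unfold Bad good
  push_neg
  refine exists_congr fun k => ?_
  constructor
  · rintro ⟨hk, hle⟩
    exact ⟨hk, by rw [← count_rot m r hr y k (Finset.mem_Icc.mp hk).1 (Finset.mem_Icc.mp hk).2]; exact hle⟩
  · rintro ⟨hk, hle⟩
    exact ⟨hk, by rw [count_rot m r hr y k (Finset.mem_Icc.mp hk).1 (Finset.mem_Icc.mp hk).2]; exact hle⟩

lemma bad_rot_card (hm : m ≠ 0) (y : Fin m → Fin (m+1)) :
    ((range m).filter fun r => Bad m (fun j => sig m r (y j))).card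
      = (univ.filter fun j => ((y j : ℕ)) < m).card := by
  have hn : ∑ i ∈ range m, xc m y i ≤ m := by
    rw [xc_sum m hm y]
    exact (Finset.card_filter_le _ _).trans (by simp)
  have hgood := cycle_count m hm (xc m y) (xc_per m y) hn
  have he : ((range m).filter fun r => Bad m (fun j => sig m r (y j)))
      = (range m).filter fun r => ¬ good m (xc m y) r :=
    Finset.filter_congr fun r hr => bad_rot_iff m r (Finset.mem_range.mp hr) y
  rw [he, Finset.filter_not, Finset.card_sdiff_of_subset (Finset.filter_subset _ _), Finset.card_range]
  have h2 : ((range m).filter (good m (xc m y))).card = m - ∑ i ∈ range m, xc m y i := by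
    have h3 : (∑ i ∈ range m, (xc m y i : ℤ)) = ((∑ i ∈ range m, xc m y i : ℕ) : ℤ) := by
      push_cast; rfl
    rw [h3] at hgood
    omega
  rw [h2, ← xc_sum m hm y]
  omega

open scoped ENNReal

lemma bad_weighted_sum (hm : m ≠ 0) (w : Fin (m+1) → ℝ≥0∞)
    (hw1 : ∑ v, w v = 1) (θ : ℝ≥0∞)
    (hwc : ∀ v : Fin (m+1), (v : ℕ) < m → w v = θ) :
    ∑ y : Fin m → Fin (m+1), (if Bad m y then ∏ j, w (y j) else 0)
      = (m : ℝ≥0∞) * θ := by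
  classical
  set F : (Fin m → Fin (m+1)) → ℝ≥0∞ := fun y => if Bad m y then ∏ j, w (y j) else 0 with hF
  -- w is invariant under sig
  have hwsig : ∀ r < m, ∀ v, w (sig m r v) = w v := by
    intro r hr v
    by_cases h : (v : ℕ) < m
    · rw [hwc _ ((sig_val_lt m r v).mpr h), hwc _ h]
    · unfold sig; rw [dif_neg h]
  -- card of low cells
  have hlow : (univ.filter fun v : Fin (m+1) => (v : ℕ) < m) = univ.erase (Fin.last m) := by
    ext v
    simp only [Finset.mem_filter, Finset.mem_univ, true_and, Finset.mem_erase, and_true]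
    have hlast : ((Fin.last m : Fin (m+1)) : ℕ) = m := rfl
    constructor
    · intro h he
      rw [he, hlast] at h
      exact lt_irrefl _ h
    · intro h
      have h1 := v.isLt
      have h2 : (v : ℕ) ≠ m := fun hc => h (Fin.ext (by rw [hc, hlast]))
      omega
  have hlowcard : (univ.filter fun v : Fin (m+1) => (v : ℕ) < m).card = m := by
    rw [hlow, Finset.card_erase_of_mem (Finset.mem_univ _), Finset.card_univ, Fintype.card_fin]
    omega
  have hθsum : ∑ v ∈ univ.filter (fun v : Fin (m+1) => (v : ℕ) < m), w v = (m : ℝ≥0∞) * θ := by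
    rw [Finset.sum_congr rfl (fun v hv => hwc v (Finset.mem_filter.mp hv).2), Finset.sum_const,
      hlowcard, nsmul_eq_mul]
  -- Step 1: rotation invariance of the sum
  have step1 : ∀ r < m,
      (∑ y : Fin m → Fin (m+1), F y)
        = ∑ y : Fin m → Fin (m+1), (if Bad m (fun j => sig m r (y j)) then ∏ j, w (y j) else 0) := by
    intro r hr
    have hbij : Function.Bijective (sig m r) :=
      (Finite.injective_iff_bijective).mp (sig_inj m r hr)
    let e : (Fin m → Fin (m+1)) ≃ (Fin m → Fin (m+1)) :=
      Equiv.arrowCongr (Equiv.refl (Fin m)) (Equiv.ofBijective _ hbij)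
    have : ∀ y, F (e y) = (if Bad m (fun j => sig m r (y j)) then ∏ j, w (y j) else 0) := by
      intro y
      have hey : e y = fun j => sig m r (y j) := rfl
      rw [hF]
      simp only [hey]
      congr 1
      exact Finset.prod_congr rfl fun j _ => hwsig r hr (y j)
    rw [← Equiv.sum_comp e F]
    exact Finset.sum_congr rfl fun y _ => this y
  -- Step 2: multiply by m and swap sums
  have step2 : (m : ℝ≥0∞) * (∑ y : Fin m → Fin (m+1), F y)
      = ∑ y : Fin m → Fin (m+1),
          ((univ.filter fun j => ((y j : ℕ)) < m).card : ℝ≥0∞) * ∏ j, w (y j) := by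
    have : (m : ℝ≥0∞) * (∑ y : Fin m → Fin (m+1), F y)
        = ∑ r ∈ range m, (∑ y : Fin m → Fin (m+1), F y) := by
      rw [Finset.sum_const, Finset.card_range, nsmul_eq_mul]
    rw [this]
    rw [Finset.sum_congr rfl (fun r hr => step1 r (Finset.mem_range.mp hr))]
    rw [Finset.sum_comm]
    have hcount : ∀ y : Fin m → Fin (m+1),
        ∑ r ∈ range m, (if Bad m (fun j => sig m r (y j)) then ∏ j, w (y j) else 0)
          = ((univ.filter fun j => ((y j : ℕ)) < m).card : ℝ≥0∞) * ∏ j, w (y j) := by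
      intro y
      rw [← Finset.sum_filter, Finset.sum_const, bad_rot_card m hm y, nsmul_eq_mul]
    exact Finset.sum_congr rfl fun y _ => hcount y
  -- Step 3: evaluate the right-hand side
  have step3 : ∑ y : Fin m → Fin (m+1),
      ((univ.filter fun j => ((y j : ℕ)) < m).card : ℝ≥0∞) * ∏ j, w (y j)
      = (m : ℝ≥0∞) * ((m : ℝ≥0∞) * θ) := by
    have expand : ∀ y : Fin m → Fin (m+1),
        ((univ.filter fun j => ((y j : ℕ)) < m).card : ℝ≥0∞) * ∏ j, w (y j)
          = ∑ j : Fin m, (if ((y j : ℕ)) < m then (1:ℝ≥0∞) else 0) * ∏ j', w (y j') := by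
      intro y
      rw [Finset.card_filter]
      push_cast
      rw [Finset.sum_mul]
    rw [Finset.sum_congr rfl fun y _ => expand y, Finset.sum_comm]
    have inner : ∀ j : Fin m,
        (∑ y : Fin m → Fin (m+1), (if ((y j : ℕ)) < m then (1:ℝ≥0∞) else 0) * ∏ j', w (y j'))
          = (m : ℝ≥0∞) * θ := by
      intro j
      set g : Fin m → Fin (m+1) → ℝ≥0∞ :=
        fun j' v => if j' = j then (if (v : ℕ) < m then w v else 0) else w v with hg
      have hprod : ∀ y : Fin m → Fin (m+1),
          (if ((y j : ℕ)) < m then (1:ℝ≥0∞) else 0) * ∏ j', w (y j')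
            = ∏ j', g j' (y j') := by
        intro y
        rw [← Finset.mul_prod_erase univ (fun j' => g j' (y j')) (Finset.mem_univ j)]
        rw [← Finset.mul_prod_erase univ (fun j' => w (y j')) (Finset.mem_univ j), ← mul_assoc]
        congr 1
        · rw [hg]; simp only [if_pos rfl]
          by_cases hb : ((y j : ℕ)) < m <;> simp [hb]
        · exact Finset.prod_congr rfl fun j' hj' => by
            rw [hg]; simp only [if_neg (Finset.mem_erase.mp hj').1]
      rw [Finset.sum_congr rfl fun y _ => hprod y]
      have hps := Finset.prod_univ_sum (fun _ : Fin m => (univ : Finset (Fin (m+1)))) g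
      rw [Fintype.piFinset_univ] at hps
      rw [← hps]
      have evalsum : ∀ j' : Fin m,
          (∑ v : Fin (m+1), g j' v) = if j' = j then (m : ℝ≥0∞) * θ else 1 := by
        intro j'
        rw [hg]
        by_cases hj : j' = j
        · simp only [if_pos hj]
          rw [← hθsum, Finset.sum_filter]
        · simp only [if_neg hj]
          exact hw1
      rw [Finset.prod_congr rfl fun j' _ => evalsum j']
      rw [Finset.prod_ite_eq' univ j (fun _ => (m : ℝ≥0∞) * θ)]
      simp
    rw [Finset.sum_congr rfl fun j _ => inner j, Finset.sum_const, Finset.card_univ,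
      Fintype.card_fin, nsmul_eq_mul]
  -- conclude by cancelling m
  have hmne : (m : ℝ≥0∞) ≠ 0 := by exact_mod_cast hm
  have hmtop : (m : ℝ≥0∞) ≠ ⊤ := ENNReal.natCast_ne_top m
  have := step2.trans step3
  exact (ENNReal.mul_right_inj hmne hmtop).mp this

end Comb


section G
variable (m : ℕ) (hm : 0 < m) (α : ℝ) (hα : α ∈ Set.Ioo (0:ℝ) 1)

/-- cell map: `(ic, (i+1)c] ↦ i` for `i < m` (where `c = α/m`), everything else to `m`. -/
noncomputable def g : ℝ → Fin (m+1) := fun t =>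
  if 0 < t ∧ t ≤ α then
    ⟨min (m-1) (⌈t / (α / m)⌉.toNat - 1),
      Nat.lt_succ_of_le ((Nat.min_le_left _ _).trans (Nat.sub_le m 1))⟩
  else ⟨m, Nat.lt_succ_self m⟩

include hm hα

lemma c_pos : 0 < α / m := div_pos hα.1 (by exact_mod_cast hm)

lemma mc_eq : (m : ℝ) * (α / m) = α := by
  field_simp

lemma g_eq_iff (i : ℕ) (hi : i < m) (t : ℝ) :
    g m α t = ⟨i, by omega⟩ ↔ t ∈ Set.Ioc ((i : ℝ) * (α / m)) (((i : ℝ) + 1) * (α / m)) := by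
  have hc := c_pos m hm α hα
  set c := α / m with hc'
  constructor
  · intro h
    unfold g at h
    split_ifs at h with hcond
    · have hval : min (m-1) (⌈t / c⌉.toNat - 1) = i := congrArg Fin.val h
      have h1 : 0 < t := hcond.1
      have h2 : t ≤ α := hcond.2
      have hdiv : t / c ≤ m := by
        rw [div_le_iff₀ hc]
        calc t ≤ α := h2
          _ = m * c := (mc_eq m hm α hα).symm
      have hceil_le : ⌈t / c⌉ ≤ (m : ℤ) := Int.ceil_le.mpr (by exact_mod_cast hdiv)
      have hceil_pos : 0 < ⌈t / c⌉ := Int.ceil_pos.mpr (div_pos h1 hc)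
      have hN : ⌈t / c⌉.toNat - 1 ≤ m - 1 := by omega
      rw [min_eq_right hN] at hval
      have hceil : ⌈t / c⌉ = (i : ℤ) + 1 := by omega
      have := Int.ceil_eq_iff.mp hceil
      obtain ⟨hl, hr⟩ := this
      constructor
      · have : ((i : ℝ)) < t / c := by push_cast at hl ⊢; linarith
        calc (i:ℝ) * c < (t/c) * c := by exact mul_lt_mul_of_pos_right this hc
          _ = t := div_mul_cancel₀ t hc.ne'
      · have : t / c ≤ (i : ℝ) + 1 := by push_cast at hr ⊢; linarith
        calc t = (t/c) * c := (div_mul_cancel₀ t hc.ne').symm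
          _ ≤ ((i:ℝ)+1) * c := mul_le_mul_of_nonneg_right this hc.le
    · exact absurd (congrArg Fin.val h) (by simp; omega)
  · rintro ⟨h1, h2⟩
    have ht0 : 0 < t := lt_of_le_of_lt (by positivity) h1
    have htα : t ≤ α := by
      calc t ≤ ((i:ℝ)+1) * c := h2
        _ ≤ (m : ℝ) * c := by
            apply mul_le_mul_of_nonneg_right _ hc.le
            have : ((i:ℝ)) + 1 ≤ (m:ℝ) := by exact_mod_cast Nat.succ_le_of_lt hi
            exact this
        _ = α := mc_eq m hm α hα
    have hceil : ⌈t / c⌉ = (i : ℤ) + 1 := by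
      rw [Int.ceil_eq_iff]
      constructor
      · push_cast
        have : (i : ℝ) < t / c := by
          rw [lt_div_iff₀ hc]; linarith
        linarith
      · push_cast
        rw [div_le_iff₀ hc]; linarith
    unfold g
    rw [if_pos ⟨ht0, htα⟩]
    apply Fin.ext
    simp only
    rw [hceil]
    omega
omit hα in
lemma g_eq_last_iff (t : ℝ) : g m α t = Fin.last m ↔ (t ≤ 0 ∨ α < t) := by
  unfold g
  split_ifs with hcond
  · constructor
    · intro h
      have hv : min (m-1) (⌈t / (α / m)⌉.toNat - 1) = m := by
        simpa using congrArg Fin.val h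
      omega
    · intro h; exfalso; rcases h with h | h
      · linarith [hcond.1]
      · linarith [hcond.2]
  · constructor
    · intro _
      by_contra hcon
      push_neg at hcon
      exact hcond ⟨hcon.1, hcon.2⟩
    · intro _; rfl
lemma g_val_lt_iff (k : ℕ) (hk1 : 1 ≤ k) (hkm : k ≤ m) (t : ℝ) (ht : 0 < t) :
    ((g m α t : ℕ)) < k ↔ t ≤ (k : ℝ) * (α / m) := by
  have hc := c_pos m hm α hα
  set c := α / m with hc'
  by_cases hta : t ≤ α
  · have hdiv : t / c ≤ m := by
      rw [div_le_iff₀ hc]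
      calc t ≤ α := hta
        _ = m * c := (mc_eq m hm α hα).symm
    have hceil_le : ⌈t / c⌉ ≤ (m : ℤ) := Int.ceil_le.mpr (by exact_mod_cast hdiv)
    have hceil_pos : 0 < ⌈t / c⌉ := Int.ceil_pos.mpr (div_pos ht hc)
    have hval : ((g m α t : ℕ)) = ⌈t / c⌉.toNat - 1 := by
      unfold g
      rw [if_pos ⟨ht, hta⟩]
      simp only [Fin.val_mk, ← hc']
      omega
    rw [hval]
    have hiff : ⌈t / c⌉.toNat - 1 < k ↔ ⌈t / c⌉ ≤ (k : ℤ) := by omega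
    rw [hiff, Int.ceil_le]
    push_cast
    rw [div_le_iff₀ hc]
  · have hval : ((g m α t : ℕ)) = m := by
      unfold g
      rw [if_neg (fun hcon => hta hcon.2)]
    rw [hval]
    constructor
    · intro h; omega
    · intro h
      exfalso
      apply hta
      calc t ≤ (k:ℝ) * c := h
        _ ≤ (m:ℝ) * c := by
            apply mul_le_mul_of_nonneg_right _ hc.le
            exact_mod_cast hkm
        _ = α := mc_eq m hm α hα

lemma measurable_g : Measurable (g m α) := by
  apply measurable_to_countable'
  intro v
  by_cases hv : (v : ℕ) < m
  · have : g m α ⁻¹' {v} = Set.Ioc (((v:ℕ) : ℝ) * (α / m)) ((((v:ℕ) : ℝ) + 1) * (α / m)) := by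
      ext t
      rw [Set.mem_preimage, Set.mem_singleton_iff]
      have := g_eq_iff m hm α hα (v : ℕ) hv t
      rw [show (⟨(v:ℕ), by omega⟩ : Fin (m+1)) = v from Fin.ext rfl] at this
      exact this
    rw [this]
    exact measurableSet_Ioc
  · have hvl : v = Fin.last m := by
      apply Fin.ext
      have := v.isLt
      simp only [Fin.val_last]
      omega
    subst hvl
    have : g m α ⁻¹' {Fin.last m} = Set.Iic 0 ∪ Set.Ioi α := by
      ext t
      rw [Set.mem_preimage, Set.mem_singleton_iff, g_eq_last_iff m hm α t]
      simp [Set.mem_Iic, Set.mem_Ioi]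
    rw [this]
    exact measurableSet_Iic.union measurableSet_Ioi

end G


lemma event_iff (m : ℕ) (hm : 0 < m) (α : ℝ) (hα0 : 0 < α) (p : Fin m → ℝ) :
    (∃ i : Fin m, p i ≤ ((Finset.univ.filter fun j => p j ≤ p i).card : ℝ) * α / m)
      ↔ ∃ k ∈ Finset.Icc 1 m,
          k ≤ (Finset.univ.filter fun j => p j ≤ (k:ℝ) * (α / m)).card := by
  have hc : 0 ≤ α / m := le_of_lt (div_pos hα0 (by exact_mod_cast hm))
  constructor
  · rintro ⟨i, hi⟩
    set K := (Finset.univ.filter fun j => p j ≤ p i).card with hK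
    have hK1 : 1 ≤ K := by
      rw [hK]
      exact Finset.card_pos.mpr ⟨i, by simp⟩
    have hKm : K ≤ m := by
      rw [hK]
      exact le_trans (Finset.card_filter_le _ _) (by simp)
    refine ⟨K, Finset.mem_Icc.mpr ⟨hK1, hKm⟩, ?_⟩
    rw [hK]
    apply Finset.card_le_card
    intro j hj
    simp only [Finset.mem_filter, Finset.mem_univ, true_and] at hj ⊢
    calc p j ≤ p i := hj
      _ ≤ (K:ℝ) * α / m := hi
      _ = (K:ℝ) * (α / m) := mul_div_assoc _ _ _
  · rintro ⟨k, hk, hcard⟩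
    rw [Finset.mem_Icc] at hk
    have hA : (Finset.univ.filter fun j => p j ≤ (k:ℝ) * (α / m)).Nonempty := by
      rw [← Finset.card_pos]; omega
    obtain ⟨i, hiA, hmax⟩ := Finset.exists_max_image _ p hA
    refine ⟨i, ?_⟩
    have hsub : (Finset.univ.filter fun j => p j ≤ (k:ℝ) * (α / m))
        ⊆ (Finset.univ.filter fun j => p j ≤ p i) := by
      intro j hj
      simp only [Finset.mem_filter, Finset.mem_univ, true_and]
      exact hmax j hj
    have hle : (k:ℝ) ≤ ((Finset.univ.filter fun j => p j ≤ p i).card : ℝ) := by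
      exact_mod_cast le_trans hcard (Finset.card_le_card hsub)
    have hpi : p i ≤ (k:ℝ) * (α / m) := by
      simpa using (Finset.mem_filter.mp hiA).2
    calc p i ≤ (k:ℝ) * (α / m) := hpi
      _ ≤ ((Finset.univ.filter fun j => p j ≤ p i).card : ℝ) * (α / m) :=
          mul_le_mul_of_nonneg_right hle hc
      _ = _ * α / m := (mul_div_assoc _ _ _).symm


end BHProof

open scoped ENNReal

/-- FDR of BH under the full null, Benjamini–Yekutieli Thm 5.1 special case:
if all `m` nulls are true and the p-values are i.i.d. `Uniform(0,1)`, then the FDR of the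
level-`α` BH procedure, which equals `P(∃ i : P₍ᵢ₎ ≤ iα/m)`, is exactly `α`.
(Here `P₍ᵢ₎ ≤ iα/m` for some `i` is expressed as `∃ i, Pᵢ ≤ #{j : Pⱼ ≤ Pᵢ}·α/m`.) -/
theorem bh_fdr_full_null_uniform
    {Ω : Type*} [MeasurableSpace Ω] (μ : Measure Ω) [IsProbabilityMeasure μ]
    (m : ℕ) (hm : 0 < m) (α : ℝ) (hα : α ∈ Ioo (0:ℝ) 1)
    (P : Fin m → Ω → ℝ) (hP : ∀ i, Measurable (P i))
    (hindep : iIndepFun P μ)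
    (hunif : ∀ i, Measure.map (P i) μ = volume.restrict (Set.Ioo (0:ℝ) 1)) :
    μ {ω | ∃ i : Fin m, P i ω ≤
        ((Finset.univ.filter fun j => P j ω ≤ P i ω).card : ℝ) * α / m}
      = ENNReal.ofReal α := by
  classical
  obtain ⟨hα0, hα1⟩ := hα
  have hm' : m ≠ 0 := hm.ne'
  have hαm : α ∈ Set.Ioo (0:ℝ) 1 := ⟨hα0, hα1⟩
  set G : ℝ → Fin (m+1) := BHProof.g m α with hG
  have hmg : Measurable G := BHProof.measurable_g m hm α hαm
  set Y : Fin m → Ω → Fin (m+1) := fun j ω => G (P j ω) with hY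
  have hYmeas : ∀ j, Measurable (Y j) := fun j => hmg.comp (hP j)
  have hYindep : iIndepFun Y μ :=
    hindep.comp (fun _ => G) (fun _ => hmg)
  set w : Fin (m+1) → ℝ≥0∞ :=
    fun v => if (v:ℕ) < m then ENNReal.ofReal (α/m) else ENNReal.ofReal (1-α) with hw
  -- law of each Y j
  have hlaw : ∀ j v, μ (Y j ⁻¹' {v}) = w v := by
    intro j v
    have hpre : Y j ⁻¹' {v} = P j ⁻¹' (G ⁻¹' {v}) := rfl
    rw [hpre, ← Measure.map_apply (hP j) (hmg (measurableSet_singleton v)), hunif j,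
      Measure.restrict_apply (hmg (measurableSet_singleton v))]
    by_cases hv : (v:ℕ) < m
    · have hGpre : G ⁻¹' {v}
          = Set.Ioc (((v:ℕ) : ℝ) * (α / m)) ((((v:ℕ) : ℝ) + 1) * (α / m)) := by
        ext t
        rw [Set.mem_preimage, Set.mem_singleton_iff]
        have := BHProof.g_eq_iff m hm α hαm (v : ℕ) hv t
        rw [show (⟨(v:ℕ), by omega⟩ : Fin (m+1)) = v from Fin.ext rfl] at this
        exact this
      have hc := BHProof.c_pos m hm α hαm
      have hsub : Set.Ioc (((v:ℕ) : ℝ) * (α / m)) ((((v:ℕ) : ℝ) + 1) * (α / m))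
          ⊆ Set.Ioo (0:ℝ) 1 := by
        intro t ht
        constructor
        · have : (0:ℝ) ≤ ((v:ℕ) : ℝ) * (α / m) := by positivity
          linarith [ht.1]
        · have h2 : (((v:ℕ) : ℝ) + 1) * (α / m) ≤ (m : ℝ) * (α / m) := by
            apply mul_le_mul_of_nonneg_right _ hc.le
            have : ((v:ℕ) : ℝ) + 1 ≤ (m : ℝ) := by exact_mod_cast Nat.succ_le_of_lt hv
            exact this
          have h3 := BHProof.mc_eq m hm α hαm
          linarith [ht.2]
      rw [hGpre, Set.inter_eq_left.mpr hsub, Real.volume_Ioc]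
      simp only [hw]
      rw [if_pos hv]
      congr 1
      ring
    · have hvl : v = Fin.last m := by
        apply Fin.ext
        have := v.isLt
        simp only [Fin.val_last]
        omega
      have hGpre : G ⁻¹' {v} = Set.Iic 0 ∪ Set.Ioi α := by
        ext t
        rw [Set.mem_preimage, Set.mem_singleton_iff, hvl, BHProof.g_eq_last_iff m hm α t]
        simp [Set.mem_Iic, Set.mem_Ioi]
      have hint : (Set.Iic (0:ℝ) ∪ Set.Ioi α) ∩ Set.Ioo (0:ℝ) 1 = Set.Ioo α 1 := by
        ext t
        simp only [Set.mem_inter_iff, Set.mem_union, Set.mem_Iic, Set.mem_Ioi, Set.mem_Ioo]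
        constructor
        · rintro ⟨h1 | h1, h2, h3⟩
          · linarith
          · exact ⟨h1, h3⟩
        · rintro ⟨h1, h2⟩
          exact ⟨Or.inr h1, by linarith, h2⟩
      rw [hGpre, hint, Real.volume_Ioo]
      simp only [hw]
      rw [if_neg hv]
  -- total mass one
  have hofm : (m : ℝ≥0∞) * ENNReal.ofReal (α/m) = ENNReal.ofReal α := by
    rw [← ENNReal.ofReal_natCast m, ← ENNReal.ofReal_mul (by positivity)]
    rw [BHProof.mc_eq m hm α hαm]
  have hw1 : ∑ v : Fin (m+1), w v = 1 := by
    rw [Fin.sum_univ_castSucc]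
    have h1 : ∀ i : Fin m, w i.castSucc = ENNReal.ofReal (α/m) := by
      intro i
      simp only [hw, Fin.coe_castSucc]
      rw [if_pos i.isLt]
    have h2 : w (Fin.last m) = ENNReal.ofReal (1-α) := by
      simp only [hw, Fin.val_last]
      rw [if_neg (lt_irrefl m)]
    rw [Finset.sum_congr rfl (fun i _ => h1 i), h2, Finset.sum_const, Finset.card_univ,
      Fintype.card_fin, nsmul_eq_mul, hofm, ← ENNReal.ofReal_add hα0.le (by linarith)]
    norm_num
  -- joint fibers
  have hfiber : ∀ y : Fin m → Fin (m+1),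
      μ (⋂ j, Y j ⁻¹' {y j}) = ∏ j, w (y j) := by
    intro y
    have := hYindep.measure_inter_preimage_eq_mul Finset.univ
      (sets := fun j => {y j}) (fun i _ => measurableSet_singleton _)
    rw [show (⋂ i ∈ Finset.univ, Y i ⁻¹' {y i}) = ⋂ j, Y j ⁻¹' {y j} from by
      simp] at this
    rw [this]
    exact Finset.prod_congr rfl fun j _ => hlaw j (y j)
  -- the Bad event
  set Bset : Set Ω := {ω | BHProof.Bad m (fun j => Y j ω)} with hBsetdef
  have hBunion : Bset = ⋃ y ∈ Finset.univ.filter (BHProof.Bad m),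
      ⋂ j, Y j ⁻¹' {y j} := by
    ext ω
    simp only [hBsetdef, Set.mem_setOf_eq, Set.mem_iUnion, Set.mem_iInter, Set.mem_preimage,
      Set.mem_singleton_iff, Finset.mem_filter, Finset.mem_univ, true_and]
    constructor
    · intro h
      exact ⟨fun j => Y j ω, h, fun j => rfl⟩
    · rintro ⟨y, hy, he⟩
      have : (fun j => Y j ω) = y := funext he
      rwa [this]
  have hBmeas : μ Bset = ∑ y ∈ Finset.univ.filter (BHProof.Bad m), ∏ j, w (y j) := by
    rw [hBunion, measure_biUnion_finset]
    · exact Finset.sum_congr rfl fun y _ => hfiber y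
    · intro y hy y' hy' hne
      simp only [Function.onFun]
      apply Set.disjoint_left.mpr
      intro ω hω hω'
      simp only [Set.mem_iInter, Set.mem_preimage, Set.mem_singleton_iff] at hω hω'
      exact hne (funext fun j => (hω j).symm.trans (hω' j))
    · intro y hy
      exact MeasurableSet.iInter fun j => hYmeas j (measurableSet_singleton _)
  -- combinatorial evaluation
  have hcomb : μ Bset = ENNReal.ofReal α := by
    rw [hBmeas, Finset.sum_filter,
      BHProof.bad_weighted_sum m hm' w hw1 (ENNReal.ofReal (α/m))
        (fun v hv => by simp only [hw]; exact if_pos hv), hofm]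
  -- the null set
  set E : Set Ω := ⋂ j, P j ⁻¹' (Set.Ioo 0 1) with hEdef
  have hEc : μ Eᶜ = 0 := by
    rw [hEdef, Set.compl_iInter]
    apply measure_iUnion_null
    intro j
    have h1 : μ (P j ⁻¹' (Set.Ioo 0 1)) = 1 := by
      rw [← Measure.map_apply (hP j) measurableSet_Ioo, hunif j,
        Measure.restrict_apply measurableSet_Ioo, Set.inter_self, Real.volume_Ioo]
      norm_num
    have h2 := measure_compl (s := P j ⁻¹' (Set.Ioo (0:ℝ) 1))
      ((hP j) measurableSet_Ioo) (measure_ne_top μ _)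
    rw [h2, h1, measure_univ, tsub_self]
  -- intersecting with E
  set A : Set Ω := {ω | ∃ i : Fin m, P i ω ≤
      ((Finset.univ.filter fun j => P j ω ≤ P i ω).card : ℝ) * α / m} with hAdef
  have hAB : A ∩ E = Bset ∩ E := by
    ext ω
    simp only [Set.mem_inter_iff, and_congr_left_iff]
    intro hE'
    have hPmem : ∀ j, P j ω ∈ Set.Ioo (0:ℝ) 1 := by
      intro j
      exact Set.mem_iInter.mp hE' j
    rw [hAdef, hBsetdef]
    simp only [Set.mem_setOf_eq]
    rw [BHProof.event_iff m hm α hα0 (fun j => P j ω)]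
    unfold BHProof.Bad
    refine exists_congr fun k => ?_
    refine and_congr_right fun hk => ?_
    rw [Finset.mem_Icc] at hk
    have : (Finset.univ.filter fun j => P j ω ≤ (k:ℝ) * (α / m))
        = (Finset.univ.filter fun j => ((Y j ω : ℕ)) < k) := by
      apply Finset.filter_congr
      intro j _
      rw [BHProof.g_val_lt_iff m hm α hαm k hk.1 hk.2 (P j ω) (hPmem j).1]
    rw [this]
  have hinter : ∀ S : Set Ω, μ S = μ (S ∩ E) := by
    intro S
    refine le_antisymm ?_ (measure_mono Set.inter_subset_left)
    calc μ S ≤ μ ((S ∩ E) ∪ Eᶜ) := measure_mono (fun ω hω => by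
          by_cases hE' : ω ∈ E
          · exact Or.inl ⟨hω, hE'⟩
          · exact Or.inr hE')
      _ ≤ μ (S ∩ E) + μ Eᶜ := measure_union_le _ _
      _ = μ (S ∩ E) := by rw [hEc, add_zero]
  calc μ A = μ (A ∩ E) := hinter A
    _ = μ (Bset ∩ E) := by rw [hAB]
    _ = μ Bset := (hinter Bset).symm
    _ = ENNReal.ofReal α := hcomb
end
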